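/- If (j,n) ∈ Δ, then φ(j,n) = (β/α)^j · n! is a positive integer and ω(n) divides φ(j,n). -/

import Mathlib

open Real Filter Nat

/-- `L₁` dissects `L₂` if both `L₂ \ L₁` and `L₁ ∩ L₂` are infinite. -/
def Dissects {T : Type*} (L₁ L₂ : Set (List T)) : Prop :=
  (L₂ \ L₁).Infinite ∧ (L₁ ∩ L₂).Infinite

/-- `L` is REG-dissectible if some regular language dissects it. -/
def RegDissectible {T : Type*} (L : Set (List T)) : Prop :=
  ∃ R : Set (List T), Language.IsRegular R ∧ Dissects R L

/-- `L` is `c`-geometrically growing. -/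
def GeomGrowing {T : Type*} (c : ℝ) (L : Set (List T)) : Prop :=
  ∀ u ∈ L, ∃ v ∈ L, u.length < v.length ∧ (v.length : ℝ) ≤ c * u.length

/-- `γ = 1/(ln β − ln α)`. -/
noncomputable def gam (α β : ℕ) : ℝ := 1 / (Real.log β - Real.log α)

/-- `⌊γ ln n⌋`. -/
noncomputable def flog (α β n : ℕ) : ℕ := ⌊gam α β * Real.log n⌋₊

/-- `(j, n) ∈ Δ`. -/
def InDelta (α β j n : ℕ) : Prop := α * flog α β n < n ∧ j ≤ flog α β n

/-- `φ(j,n) = (β/α)^j · n!`, regarded as a real number. -/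
noncomputable def phi (α β j n : ℕ) : ℝ := ((β : ℝ) / (α : ℝ)) ^ j * (n ! : ℝ)

/-- `ω(n) = n!/((α⌊γ ln n⌋ + 1)!)`, a natural number. -/
noncomputable def om (α β n : ℕ) : ℕ := n ! / (α * flog α β n + 1)!


lemma pow_dvd_mul_factorial (a : ℕ) (ha : 0 < a) : ∀ k, a ^ k ∣ (a * k)! := by
  intro k
  induction k with
  | zero => simp
  | succ k ih =>
    have he : a * (k + 1) = a * k + (a - 1) + 1 := by rw [Nat.mul_succ]; omega
    have h1 : (a * k)! ∣ (a * k + (a - 1))! := Nat.factorial_dvd_factorial (by omega)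
    have h3 : a ∣ (a * k + (a - 1) + 1) := ⟨k + 1, by omega⟩
    rw [he, Nat.factorial_succ, pow_succ']
    exact mul_dvd_mul h3 (ih.trans h1)

/-- If `(j,n) ∈ Δ` then `φ(j,n)` is a positive integer divisible by `ω(n)`. -/
theorem stmt_4 (α β : ℕ) (hα : 0 < α) (hαβ : α < β) (j n : ℕ) (h : InDelta α β j n) :
    ∃ m : ℕ, 0 < m ∧ (m : ℝ) = phi α β j n ∧ om α β n ∣ m := by
  obtain ⟨h1, h2⟩ := h
  set k := flog α β n with hk
  have hdvdα : α ^ j ∣ (α * k + 1)! :=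
    (pow_dvd_pow α h2).trans ((pow_dvd_mul_factorial α hα k).trans
      (Nat.factorial_dvd_factorial (Nat.le_succ _)))
  have hfd : (α * k + 1)! ∣ n ! := Nat.factorial_dvd_factorial h1
  refine ⟨om α β n * (β ^ j * ((α * k + 1)! / α ^ j)), ?_, ?_, dvd_mul_right _ _⟩
  · refine Nat.mul_pos (Nat.div_pos (Nat.le_of_dvd (Nat.factorial_pos _) hfd) (Nat.factorial_pos _))
      (Nat.mul_pos (pow_pos (by omega) j)
        (Nat.div_pos (Nat.le_of_dvd (Nat.factorial_pos _) hdvdα) (pow_pos hα j)))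
  · have e1 : ((om α β n : ℕ) : ℝ) = (n ! : ℝ) / ((α * k + 1)! : ℝ) := by
      rw [om, ← hk]; exact Nat.cast_div hfd (Nat.cast_ne_zero.mpr (Nat.factorial_pos _).ne')
    have e2 : (((α * k + 1)! / α ^ j : ℕ) : ℝ) = ((α * k + 1)! : ℝ) / (α : ℝ) ^ j := by
      rw [Nat.cast_div hdvdα (Nat.cast_ne_zero.mpr (pow_pos hα j).ne')]
      push_cast; ring
    have hα0 : ((α : ℝ)) ^ j ≠ 0 := by positivity
    have hf0 : (((α * k + 1)! : ℕ) : ℝ) ≠ 0 := Nat.cast_ne_zero.mpr (Nat.factorial_pos _).ne'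
    rw [phi]
    push_cast [e1, e2]
    field_simp
    rw [div_pow, mul_div_assoc', mul_div_right_comm, div_self hα0, one_mul]
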